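/- Let n ≥ 1 and let α, β : Fin n → ℝ be such that the 2n complex numbers e^{2πi α(i)} and e^{2πi β(j)} are pairwise distinct. Let M₀ be the diagonal matrix with entries e^{2πi α(k)}, let N be the matrix with entries N i j = 1 / (e^{2πi β(j)} − e^{2πi α(i)}), let 𝟏 ∈ ℂⁿ be the all-ones vector, and set M₁ := Id + M₀⁻¹ ⬝ (𝟏 ⬝ (𝟏ᵀ ⬝ N⁻¹)). Then det M₁ = e^{2πi ((∑ j, β j) − (∑ i, α i))}. -/

import Mathlib

open Matrix Complex Polynomial Finset

-- Cauchy matrix has nonzero determinant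
lemma cauchy_det_ne_zero (n : ℕ) (x y : Fin n → ℂ)
    (hx : Function.Injective x) (hy : Function.Injective y)
    (hxy : ∀ i j, y j ≠ x i) :
    (Matrix.of fun i j => 1 / (y j - x i) : Matrix (Fin n) (Fin n) ℂ).det ≠ 0 := by
  set N : Matrix (Fin n) (Fin n) ℂ := Matrix.of fun i j => 1 / (y j - x i)
  intro hdet
  obtain ⟨v, hv, hNv⟩ := (Matrix.exists_mulVec_eq_zero_iff.mpr hdet)
  set P : Polynomial ℂ := ∑ j, C (v j) * ∏ k ∈ Finset.univ.erase j, (C (y k) - X) with hP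
  have hn0 : 0 < n := by
    rcases Nat.eq_zero_or_pos n with rfl | hn0
    · exact absurd hdet (by simp [Matrix.det_fin_zero, N])
    · exact hn0
  have hPdeg : P.natDegree < n := by
    have hbound : ∀ j ∈ (Finset.univ : Finset (Fin n)),
        (C (v j) * ∏ k ∈ Finset.univ.erase j, (C (y k) - X)).natDegree ≤ n - 1 := by
      intro j _
      refine natDegree_mul_le.trans ?_
      rw [natDegree_C, zero_add]
      refine (natDegree_prod_le _ _).trans ?_
      refine (Finset.sum_le_card_nsmul _ _ 1 ?_).trans ?_
      · intro k _
        exact (natDegree_sub_le _ _).trans (by simp)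
      · simp [Finset.card_erase_of_mem]
    exact lt_of_le_of_lt (natDegree_sum_le_of_forall_le _ _ hbound) (Nat.sub_lt hn0 one_pos)
  have hPx : ∀ i, P.eval (x i) = 0 := by
    intro i
    have hcol : ∀ k, y k - x i ≠ 0 := fun k => sub_ne_zero.mpr (hxy i k)
    have h0 : (N.mulVec v) i = 0 := by rw [hNv]; rfl
    have h1 : (∏ k, (y k - x i)) * (N.mulVec v) i = P.eval (x i) := by
      rw [Matrix.mulVec, dotProduct, Finset.mul_sum]
      simp only [hP, eval_finset_sum, eval_mul, eval_prod, eval_sub, eval_C, eval_X]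
      refine Finset.sum_congr rfl fun j _ => ?_
      have : (∏ k, (y k - x i)) = (y j - x i) * ∏ k ∈ Finset.univ.erase j, (y k - x i) := by
        rw [← Finset.mul_prod_erase _ _ (Finset.mem_univ j)]
      rw [this]
      simp only [N, Matrix.of_apply]
      generalize (∏ k ∈ Finset.univ.erase j, (y k - x i)) = Q
      have hc : (y j - x i) * (1 / (y j - x i)) = 1 := mul_one_div_cancel (hcol j)
      linear_combination Q * v j * hc
    rw [← h1, h0, mul_zero]
  have hP0 : P = 0 := by
    refine eq_zero_of_natDegree_lt_card_of_eval_eq_zero P hx hPx ?_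
    simpa using hPdeg
  -- evaluate at y j to get v j = 0
  apply hv
  funext j
  have := congrArg (Polynomial.eval (y j)) hP0
  simp only [hP, eval_finset_sum, eval_mul, eval_prod, eval_sub, eval_C, eval_X, eval_zero] at this
  rw [Finset.sum_eq_single j] at this
  · have hne : (∏ k ∈ Finset.univ.erase j, (y k - y j)) ≠ 0 := by
      refine Finset.prod_ne_zero_iff.mpr fun k hk => sub_ne_zero.mpr ?_
      exact fun h => (Finset.mem_erase.mp hk).1 (hy h)
    have := mul_eq_zero.mp this
    tauto
  · intro b _ hbj
    apply mul_eq_zero_of_right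
    refine Finset.prod_eq_zero (Finset.mem_erase.mpr ⟨fun h => hbj h.symm, Finset.mem_univ j⟩) ?_
    simp
  · simp

theorem det_monodromy_at_one (n : ℕ) (hn : 1 ≤ n) (α β : Fin n → ℝ)
    (hdist : Function.Injective
      (Sum.elim (fun i => Complex.exp (2 * Real.pi * Complex.I * α i))
        (fun j => Complex.exp (2 * Real.pi * Complex.I * β j)) : Fin n ⊕ Fin n → ℂ))
    (M₀ : Matrix (Fin n) (Fin n) ℂ)
    (hM₀ : M₀ = Matrix.diagonal fun k => Complex.exp (2 * Real.pi * Complex.I * α k))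
    (N : Matrix (Fin n) (Fin n) ℂ)
    (hN : N = Matrix.of fun i j => 1 / (Complex.exp (2 * Real.pi * Complex.I * β j) -
      Complex.exp (2 * Real.pi * Complex.I * α i)))
    (M₁ : Matrix (Fin n) (Fin n) ℂ)
    (hM₁ : M₁ = 1 + M₀⁻¹ *
      Matrix.vecMulVec (fun _ => (1 : ℂ)) (Matrix.vecMul (fun _ => (1 : ℂ)) N⁻¹)) :
    M₁.det = Complex.exp (2 * Real.pi * Complex.I * ((∑ j, (β j : ℂ)) - ∑ i, (α i : ℂ))) := by
  set x : Fin n → ℂ := fun i => Complex.exp (2 * Real.pi * Complex.I * α i) with hxdef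
  set y : Fin n → ℂ := fun j => Complex.exp (2 * Real.pi * Complex.I * β j) with hydef
  have hxinj : Function.Injective x := fun i i' h => by
    have := hdist (a₁ := Sum.inl i) (a₂ := Sum.inl i') (by simpa using h)
    simpa using this
  have hyinj : Function.Injective y := fun j j' h => by
    have := hdist (a₁ := Sum.inr j) (a₂ := Sum.inr j') (by simpa using h)
    simpa using this
  have hxy : ∀ i j, y j ≠ x i := fun i j h => by
    have := hdist (a₁ := Sum.inr j) (a₂ := Sum.inl i) (by simpa using h)
    simp at this
  have hx0 : ∀ i, x i ≠ 0 := fun i => Complex.exp_ne_zero _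
  have hNdet : N.det ≠ 0 := by
    rw [hN]; exact cauchy_det_ne_zero n x y hxinj hyinj hxy
  have hM₀det : M₀.det = ∏ i, x i := by rw [hM₀, Matrix.det_diagonal]
  have hM₀ne : M₀.det ≠ 0 := by
    rw [hM₀det]; exact Finset.prod_ne_zero_iff.mpr fun i _ => hx0 i
  have key : M₀ * N + Matrix.vecMulVec (fun _ => (1:ℂ)) (fun _ => (1:ℂ))
      = N * Matrix.diagonal y := by
    ext i j
    have hne : y j - x i ≠ 0 := sub_ne_zero.mpr (hxy i j)
    simp only [Matrix.add_apply, hM₀, hN, Matrix.diagonal_mul, Matrix.mul_diagonal,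
      Matrix.of_apply, Matrix.vecMulVec_apply, mul_one]
    field_simp
    change x i / (y j - x i) + 1 = y j / (y j - x i)
    rw [div_add_one hne]; ring
  have hJ : Matrix.vecMulVec (fun _ => (1:ℂ)) (Matrix.vecMul (fun _ => (1:ℂ)) N⁻¹)
      = Matrix.vecMulVec (fun _ => (1:ℂ)) (fun _ => (1:ℂ)) * N⁻¹ := by
    ext i j
    simp [Matrix.vecMulVec_apply, Matrix.mul_apply, Matrix.vecMul, dotProduct]
  have hMul : M₀ * M₁ = N * Matrix.diagonal y * N⁻¹ := by
    rw [hM₁, Matrix.mul_add, Matrix.mul_one, Matrix.mul_nonsing_inv_cancel_left _ _ hM₀ne.isUnit,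
      hJ, ← key, Matrix.add_mul, Matrix.mul_nonsing_inv_cancel_right _ _ hNdet.isUnit]
  have hdet2 : M₀.det * M₁.det = ∏ j, y j := by
    rw [← Matrix.det_mul, hMul, Matrix.det_mul, Matrix.det_mul, Matrix.det_diagonal,
      Matrix.det_nonsing_inv, Ring.inverse_eq_inv']
    field_simp
  have hM₁det : M₁.det = (∏ j, y j) / (∏ i, x i) := by
    rw [← hdet2, hM₀det]
    field_simp [hM₀det ▸ hM₀ne]
  rw [hM₁det, mul_sub, Complex.exp_sub, Finset.mul_sum, Finset.mul_sum,
    Complex.exp_sum, Complex.exp_sum]
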